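/- The configuration with all spins minus and the configuration with all spins plus are both local minima of H for the alternate dynamics, and H(+1) < H(−1) whenever h > 0 (so −1 is not the global minimum). -/
import Mathlib


open Finset

abbrev Site (L M : ℕ) := ZMod (2*L) × ZMod (2*M)

abbrev Config (L M : ℕ) := Site L M → Bool

def spin (b : Bool) : ℤ := if b then 1 else -1

def flipC {L M : ℕ} (σ : Config L M) (I : Finset (Site L M)) : Config L M :=
  fun x => if x ∈ I then !(σ x) else σ x

noncomputable def ham {L M : ℕ} [NeZero L] [NeZero M] (J h : ℝ) (σ : Config L M) : ℝ :=
  -(J/2) * ∑ x : Site L M,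
      ((spin (σ x) * spin (σ (x + (1,0))) + spin (σ x) * spin (σ (x + (0,1))) : ℤ) : ℝ)
    - (h/2) * ∑ x : Site L M, ((spin (σ x) : ℤ) : ℝ)

def evens (L M : ℕ) [NeZero L] [NeZero M] : Finset (Site L M) :=
  univ.filter fun x => Even (x.1.val + x.2.val)

def odds (L M : ℕ) [NeZero L] [NeZero M] : Finset (Site L M) :=
  univ.filter fun x => ¬ Even (x.1.val + x.2.val)

def adj {L M : ℕ} (x y : Site L M) : Prop :=
  y = x + (1,0) ∨ x = y + (1,0) ∨ y = x + (0,1) ∨ x = y + (0,1)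
def rectConf (L M : ℕ) [NeZero L] [NeZero M] (a b : ℕ) : Config L M :=
  fun x => decide (∃ i < a, ∃ j < b, x = ((i : ZMod (2*L)), ((j : ZMod (2*M)))))

def allMinus (L M : ℕ) : Config L M := fun _ => false

-- auxiliary lemmas

lemma val_add_one_mod_two {n : ℕ} (hn : 2 ≤ n) (he : 2 ∣ n) (a : ZMod n) :
    (a + 1).val % 2 = (a.val + 1) % 2 := by
  haveI : NeZero n := ⟨by omega⟩
  haveI : Fact (1 < n) := ⟨by omega⟩
  rw [ZMod.val_add, ZMod.val_one, Nat.mod_mod_of_dvd _ he]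

lemma flip_parity {L M : ℕ} [NeZero L] [NeZero M] (x e : Site L M)
    (he : e = (1,0) ∨ e = (0,1)) :
    Even ((x+e).1.val + (x+e).2.val) ↔ ¬ Even (x.1.val + x.2.val) := by
  have hL : 2 ≤ 2*L := by have := NeZero.pos L; omega
  have hM : 2 ≤ 2*M := by have := NeZero.pos M; omega
  rcases he with rfl | rfl
  · have h1 := val_add_one_mod_two hL ⟨L, rfl⟩ x.1
    have h2 : (x + ((1:ZMod (2*L)), (0:ZMod (2*M)))).1 = x.1 + 1 := rfl
    have h3 : (x + ((1:ZMod (2*L)), (0:ZMod (2*M)))).2 = x.2 := by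
      show x.2 + 0 = x.2; ring
    rw [h2, h3, Nat.even_iff, Nat.even_iff]
    omega
  · have h1 := val_add_one_mod_two hM ⟨M, rfl⟩ x.2
    have h2 : (x + ((0:ZMod (2*L)), (1:ZMod (2*M)))).2 = x.2 + 1 := rfl
    have h3 : (x + ((0:ZMod (2*L)), (1:ZMod (2*M)))).1 = x.1 := by
      show x.1 + 0 = x.1; ring
    rw [h2, h3, Nat.even_iff, Nat.even_iff]
    omega

lemma not_both {L M : ℕ} [NeZero L] [NeZero M] {I : Finset (Site L M)}
    (hI : I ⊆ evens L M ∨ I ⊆ odds L M) (x e : Site L M)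
    (he : e = (1,0) ∨ e = (0,1)) : ¬ (x ∈ I ∧ x + e ∈ I) := by
  rintro ⟨h1, h2⟩
  have hp := flip_parity x e he
  rcases hI with h | h
  · have a1 := h h1; have a2 := h h2
    simp only [evens, mem_filter, mem_univ, true_and] at a1 a2
    exact (hp.mp a2) a1
  · have a1 := h h1; have a2 := h h2
    simp only [odds, mem_filter, mem_univ, true_and] at a1 a2
    exact a2 (hp.mpr a1)

lemma sum_ind_self {L M : ℕ} [NeZero L] [NeZero M] (I : Finset (Site L M)) :
    ∑ x : Site L M, (if x ∈ I then (1:ℤ) else 0) = I.card := by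
  simp [Finset.sum_ite_mem]

lemma sum_ind_translate {L M : ℕ} [NeZero L] [NeZero M] (I : Finset (Site L M))
    (e : Site L M) :
    ∑ x : Site L M, (if x + e ∈ I then (1:ℤ) else 0) = I.card := by
  calc ∑ x : Site L M, (if x + e ∈ I then (1:ℤ) else 0)
      = ∑ y : Site L M, (if y ∈ I then (1:ℤ) else 0) :=
        Fintype.sum_equiv (Equiv.addRight e) _ _ (fun x => rfl)
    _ = I.card := sum_ind_self I

lemma int_sum_flip {L M : ℕ} [NeZero L] [NeZero M] (b : Bool)
    (I : Finset (Site L M)) (hI : I ⊆ evens L M ∨ I ⊆ odds L M) :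
    (∑ x : Site L M, (spin (flipC (fun _ => b) I x) * spin (flipC (fun _ => b) I (x + (1,0)))
        + spin (flipC (fun _ => b) I x) * spin (flipC (fun _ => b) I (x + (0,1)))))
      = 2 * (Fintype.card (Site L M) : ℤ) - 8 * I.card := by
  have key : ∀ (x e : Site L M), e = (1,0) ∨ e = (0,1) →
      spin (flipC (fun _ => b) I x) * spin (flipC (fun _ => b) I (x+e))
        = 1 - 2 * (if x ∈ I then (1:ℤ) else 0) - 2 * (if x + e ∈ I then (1:ℤ) else 0) := by
    intro x e he
    have hnb := not_both hI x e he
    by_cases h1 : x ∈ I <;> by_cases h2 : x + e ∈ I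
    · exact absurd ⟨h1, h2⟩ hnb
    all_goals
      simp only [flipC, h1, h2, if_true, if_false, ite_true, ite_false]
      cases b <;> simp [spin]
  have : ∀ x : Site L M,
      spin (flipC (fun _ => b) I x) * spin (flipC (fun _ => b) I (x + (1,0)))
        + spin (flipC (fun _ => b) I x) * spin (flipC (fun _ => b) I (x + (0,1)))
      = 2 - 4 * (if x ∈ I then (1:ℤ) else 0)
          - 2 * (if x + (1,0) ∈ I then (1:ℤ) else 0)
          - 2 * (if x + (0,1) ∈ I then (1:ℤ) else 0) := by
    intro x
    rw [key x (1,0) (Or.inl rfl), key x (0,1) (Or.inr rfl)]; ring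
  rw [Finset.sum_congr rfl (fun x _ => this x)]
  simp only [Finset.sum_sub_distrib, ← Finset.mul_sum, sum_ind_self, sum_ind_translate,
    Finset.sum_const, Finset.card_univ, nsmul_eq_mul]
  ring

lemma int_sum_mag {L M : ℕ} [NeZero L] [NeZero M] (b : Bool)
    (I : Finset (Site L M)) :
    ∑ x : Site L M, spin (flipC (fun _ => b) I x)
      = (spin b) * ((Fintype.card (Site L M) : ℤ) - 2 * I.card) := by
  have : ∀ x : Site L M, spin (flipC (fun _ => b) I x)
      = spin b - 2 * spin b * (if x ∈ I then (1:ℤ) else 0) := by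
    intro x
    by_cases h : x ∈ I
    · simp only [flipC, h, if_true, ite_true]
      cases b <;> simp [spin]
    · simp only [flipC, h, if_false, ite_false]
      cases b <;> simp [spin]
  rw [Finset.sum_congr rfl (fun x _ => this x)]
  simp only [Finset.sum_sub_distrib, ← Finset.mul_sum, sum_ind_self,
    Finset.sum_const, Finset.card_univ, nsmul_eq_mul]
  ring

lemma ham_flip_formula {L M : ℕ} [NeZero L] [NeZero M] (J h : ℝ) (b : Bool)
    (I : Finset (Site L M)) (hI : I ⊆ evens L M ∨ I ⊆ odds L M) :
    ham J h (flipC (fun _ => b) I)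
      = -(J/2) * (2 * (Fintype.card (Site L M) : ℝ) - 8 * I.card)
        - (h/2) * ((spin b : ℤ) : ℝ) * ((Fintype.card (Site L M) : ℝ) - 2 * I.card) := by
  unfold ham
  rw [← Int.cast_sum, ← Int.cast_sum, int_sum_flip b I hI, int_sum_mag b I]
  push_cast
  ring

lemma ham_const {L M : ℕ} [NeZero L] [NeZero M] (J h : ℝ) (b : Bool) :
    ham J h (fun _ => b : Config L M)
      = -(J/2) * (2 * (Fintype.card (Site L M) : ℝ))
        - (h/2) * ((spin b : ℤ) : ℝ) * (Fintype.card (Site L M) : ℝ) := by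
  have h0 : (fun _ => b : Config L M) = flipC (fun _ => b) ∅ := by
    funext x; simp [flipC]
  rw [h0, ham_flip_formula J h b ∅ (Or.inl (by simp))]
  simp

/-- the all-minus and all-plus configurations are local minima for the
alternate dynamics, and H(+1) < H(−1). -/
theorem all_minus_all_plus_local_minima {L M : ℕ} [NeZero L] [NeZero M]
    (J h : ℝ) (hh : 0 < h) (hJ : 2*h < J) :
    (∀ I : Finset (Site L M), I.Nonempty → (I ⊆ evens L M ∨ I ⊆ odds L M) →
      ham J h (allMinus L M) ≤ ham J h (flipC (allMinus L M) I)) ∧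
    (∀ I : Finset (Site L M), I.Nonempty → (I ⊆ evens L M ∨ I ⊆ odds L M) →
      ham J h (fun _ => true : Config L M) ≤ ham J h (flipC (fun _ => true) I)) ∧
    ham J h (fun _ => true : Config L M) < ham J h (allMinus L M) := by
  have hM : allMinus L M = (fun _ => false : Config L M) := rfl
  have hcard : (0:ℝ) < (Fintype.card (Site L M) : ℝ) := by
    exact_mod_cast Fintype.card_pos
  refine ⟨?_, ?_, ?_⟩
  · intro I _ hI
    rw [hM, ham_flip_formula J h false I hI, ham_const J h false]
    have hc : (0:ℝ) ≤ (I.card : ℝ) := Nat.cast_nonneg _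
    simp only [spin]
    push_cast
    nlinarith
  · intro I _ hI
    rw [ham_flip_formula J h true I hI, ham_const J h true]
    have hc : (0:ℝ) ≤ (I.card : ℝ) := Nat.cast_nonneg _
    simp only [spin]
    push_cast
    nlinarith
  · rw [hM, ham_const J h true, ham_const J h false]
    simp only [spin]
    push_cast
    nlinarith
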